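/- On the open set {(x,y,z,p,q) ∈ ℝ⁵ : q ≠ 0}, define the 1-forms ω₁ = dy + y dz, ω₂ = −(dp − p dz), ω₃ = −dz, ω₄ = dq + q dz, ω₅ = −(dx − x dz), and s₁ = ω₁ + y²ω₂, s₂ = ω₂, s₃ = ω₃ − 2y ω₂, s̄₃ = s₃ − 2q ω₅, s̄₄ = (1/q)(ω₄ + q²ω₅), s̄₅ = q ω₅. Then the following structure equations hold at every point with q ≠ 0: ds₁ = −s₁∧s̄₃ − 2 s₁∧s̄₅, ds₂ = s₂∧s̄₃ + 2 s₂∧s̄₅, ds̄₃ = −2 s₁∧s₂ − 2 s̄₄∧s̄₅, ds̄₄ = s̄₄∧s̄₅, ds̄₅ = s̄₄∧s̄₅. -/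

import Mathlib

/-!
STATEMENT 12: structure equations for the coframe {s₁, s₂, s̄₃, s̄₄, s̄₅} of the
two copies of sl₂ on {q ≠ 0} ⊆ ℝ⁵:
ds₁ = −s₁∧s̄₃ − 2s₁∧s̄₅, ds₂ = s₂∧s̄₃ + 2s₂∧s̄₅, ds̄₃ = −2s₁∧s₂ − 2s̄₄∧s̄₅,
ds̄₄ = s̄₄∧s̄₅, ds̄₅ = s̄₄∧s̄₅.
-/

noncomputable section

/-- coordinate differentials dx, dy, dz, dp, dq on ℝ⁵ -/
def dc (i : Fin 5) : (Fin 5 → ℝ) →L[ℝ] ℝ := ContinuousLinearMap.proj i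

/-- exterior derivative of a 1-form -/
def extd {n : ℕ} (ω : (Fin n → ℝ) → ((Fin n → ℝ) →L[ℝ] ℝ)) :
    (Fin n → ℝ) → (Fin n → ℝ) → (Fin n → ℝ) → ℝ :=
  fun a u v => fderiv ℝ (fun x => ω x v) a u - fderiv ℝ (fun x => ω x u) a v

/-- wedge product of two 1-forms -/
def wedge {n : ℕ} (ω η : (Fin n → ℝ) → ((Fin n → ℝ) →L[ℝ] ℝ)) :
    (Fin n → ℝ) → (Fin n → ℝ) → (Fin n → ℝ) → ℝ :=
  fun a u v => ω a u * η a v - ω a v * η a u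

/-- ω₁ = dy + y dz -/
def ω₁ : (Fin 5 → ℝ) → ((Fin 5 → ℝ) →L[ℝ] ℝ) := fun a => dc 1 + a 1 • dc 2

/-- ω₂ = −(dp − p dz) -/
def ω₂ : (Fin 5 → ℝ) → ((Fin 5 → ℝ) →L[ℝ] ℝ) := fun a => -(dc 3 - a 3 • dc 2)

/-- ω₃ = −dz -/
def ω₃ : (Fin 5 → ℝ) → ((Fin 5 → ℝ) →L[ℝ] ℝ) := fun _ => -dc 2

/-- ω₄ = dq + q dz -/
def ω₄ : (Fin 5 → ℝ) → ((Fin 5 → ℝ) →L[ℝ] ℝ) := fun a => dc 4 + a 4 • dc 2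

/-- ω₅ = −(dx − x dz) -/
def ω₅ : (Fin 5 → ℝ) → ((Fin 5 → ℝ) →L[ℝ] ℝ) := fun a => -(dc 0 - a 0 • dc 2)

/-- s₁ = ω₁ + y²ω₂ -/
def s₁ : (Fin 5 → ℝ) → ((Fin 5 → ℝ) →L[ℝ] ℝ) := fun a => ω₁ a + (a 1)^2 • ω₂ a

/-- s₂ = ω₂ -/
def s₂ : (Fin 5 → ℝ) → ((Fin 5 → ℝ) →L[ℝ] ℝ) := ω₂

/-- s₃ = ω₃ − 2y ω₂ -/
def s₃ : (Fin 5 → ℝ) → ((Fin 5 → ℝ) →L[ℝ] ℝ) := fun a => ω₃ a - (2 * a 1) • ω₂ a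

/-- s̄₃ = s₃ − 2q ω₅ -/
def sb₃ : (Fin 5 → ℝ) → ((Fin 5 → ℝ) →L[ℝ] ℝ) := fun a => s₃ a - (2 * a 4) • ω₅ a

/-- s̄₄ = (1/q)(ω₄ + q²ω₅) -/
def sb₄ : (Fin 5 → ℝ) → ((Fin 5 → ℝ) →L[ℝ] ℝ) :=
  fun a => (1 / a 4) • (ω₄ a + (a 4)^2 • ω₅ a)

/-- s̄₅ = q ω₅ -/
def sb₅ : (Fin 5 → ℝ) → ((Fin 5 → ℝ) →L[ℝ] ℝ) := fun a => a 4 • ω₅ a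

lemma hproj (i : Fin 5) (a : Fin 5 → ℝ) : HasFDerivAt (fun x : Fin 5 → ℝ => x i) (dc i) a :=
  (ContinuousLinearMap.proj i : (Fin 5 → ℝ) →L[ℝ] ℝ).hasFDerivAt

lemma fd_s₁ (a u v : Fin 5 → ℝ) :
    fderiv ℝ (fun x => s₁ x v) a u
      = (u 1 + (u 1 * a 1 + a 1 * u 1) * a 3 + a 1 * a 1 * u 3) * v 2
        - (u 1 * a 1 + a 1 * u 1) * v 3 := by
  have hfun : (fun x : Fin 5 → ℝ => s₁ x v)
      = fun x => v 1 + x 1 * (x 1 * x 3 * v 2 - x 1 * v 3 + v 2) := by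
    funext x; simp [s₁, ω₁, ω₂, dc, pow_two]; ring
  rw [hfun]
  have h := ((((hproj 1 a).mul (((hproj 1 a).mul (hproj 3 a)).mul_const (v 2)
      |>.sub ((hproj 1 a).mul_const (v 3)) |>.add_const (v 2)))).const_add (v 1))
  erw [h.fderiv]
  simp [dc]; try ring

lemma fd_s₂ (a u v : Fin 5 → ℝ) :
    fderiv ℝ (fun x => s₂ x v) a u = u 3 * v 2 := by
  have hfun : (fun x : Fin 5 → ℝ => s₂ x v) = fun x => x 3 * v 2 - v 3 := by
    funext x; simp [s₂, ω₂, dc]; try ring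
  rw [hfun]
  have h := ((hproj 3 a).mul_const (v 2)).sub_const (v 3)
  rw [h.fderiv]
  simp [dc, mul_comm]

lemma fd_sb₃ (a u v : Fin 5 → ℝ) :
    fderiv ℝ (fun x => sb₃ x v) a u
      = 2 * u 4 * v 0 + (-(2 * u 1 * a 3) - 2 * a 1 * u 3 - 2 * u 4 * a 0 - 2 * a 4 * u 0) * v 2
        + 2 * u 1 * v 3 := by
  have hfun : (fun x : Fin 5 → ℝ => sb₃ x v)
      = fun x => x 4 * (2 * v 0) + x 1 * (2 * v 3) - (x 1 * (x 3 * (2 * v 2))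
          + x 4 * (x 0 * (2 * v 2)) + v 2) := by
    funext x; simp [sb₃, s₃, ω₃, ω₂, ω₅, dc]; try ring
  rw [hfun]
  have h := (((hproj 4 a).mul_const (2 * v 0)).add ((hproj 1 a).mul_const (2 * v 3))).sub
    ((((hproj 1 a).mul ((hproj 3 a).mul_const (2 * v 2))).add
      ((hproj 4 a).mul ((hproj 0 a).mul_const (2 * v 2)))).add_const (v 2))
  erw [h.fderiv]
  simp [dc]; try ring

lemma fd_sb₅ (a u v : Fin 5 → ℝ) :
    fderiv ℝ (fun x => sb₅ x v) a u
      = -(u 4 * v 0) + (u 4 * a 0 + a 4 * u 0) * v 2 := by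
  have hfun : (fun x : Fin 5 → ℝ => sb₅ x v)
      = fun x => x 4 * (x 0 * v 2) - x 4 * v 0 := by
    funext x; simp [sb₅, ω₅, dc]; try ring
  rw [hfun]
  have h := ((hproj 4 a).mul ((hproj 0 a).mul_const (v 2))).sub ((hproj 4 a).mul_const (v 0))
  erw [h.fderiv]
  simp [dc]; try ring

lemma fd_sb₄ (a u v : Fin 5 → ℝ) (ha : a 4 ≠ 0) :
    fderiv ℝ (fun x => sb₄ x v) a u
      = -(u 4 * v 0) + (u 4 * a 0 + a 4 * u 0) * v 2 - (a 4)⁻¹ * u 4 * (a 4)⁻¹ * v 4 := by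
  have hne : ∀ᶠ x in nhds a, x 4 ≠ 0 :=
    (continuous_apply (4 : Fin 5)).continuousAt.eventually_ne ha
  have hfun : (fun x : Fin 5 → ℝ => sb₄ x v)
      =ᶠ[nhds a] fun x => (x 4 * (x 0 * v 2) - x 4 * v 0 + v 2) + (x 4)⁻¹ * v 4 := by
    filter_upwards [hne] with x hx
    simp [sb₄, ω₄, ω₅, dc]; try field_simp
    ring
  rw [hfun.fderiv_eq]
  have hinv : HasFDerivAt (fun x : Fin 5 → ℝ => (x 4)⁻¹)
      ((-ContinuousLinearMap.mulLeftRight ℝ ℝ (a 4)⁻¹ (a 4)⁻¹).comp (dc 4)) a :=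
    (hasFDerivAt_inv' ha).comp a (hproj 4 a)
  have h := ((((hproj 4 a).mul ((hproj 0 a).mul_const (v 2))).sub
      ((hproj 4 a).mul_const (v 0))).add_const (v 2)).add (hinv.mul_const (v 4))
  erw [h.fderiv]
  simp [dc]; try ring

theorem two_sl2_copies_structure_equations :
    ∀ a : Fin 5 → ℝ, a 4 ≠ 0 → ∀ u v : Fin 5 → ℝ,
      extd s₁ a u v = -(wedge s₁ sb₃ a u v) - 2 * wedge s₁ sb₅ a u v ∧
      extd s₂ a u v = wedge s₂ sb₃ a u v + 2 * wedge s₂ sb₅ a u v ∧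
      extd sb₃ a u v = -2 * wedge s₁ s₂ a u v - 2 * wedge sb₄ sb₅ a u v ∧
      extd sb₄ a u v = wedge sb₄ sb₅ a u v ∧
      extd sb₅ a u v = wedge sb₄ sb₅ a u v := by
  intro a ha u v
  refine ⟨?_, ?_, ?_, ?_, ?_⟩
  · simp only [extd]; rw [fd_s₁ a u v, fd_s₁ a v u]
    simp [wedge, s₁, s₂, s₃, sb₃, sb₄, sb₅, ω₁, ω₂, ω₃, ω₄, ω₅, dc]
    try field_simp
    ring
  · simp only [extd]; rw [fd_s₂ a u v, fd_s₂ a v u]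
    simp [wedge, s₁, s₂, s₃, sb₃, sb₄, sb₅, ω₁, ω₂, ω₃, ω₄, ω₅, dc]
    try field_simp
    ring
  · simp only [extd]; rw [fd_sb₃ a u v, fd_sb₃ a v u]
    simp [wedge, s₁, s₂, s₃, sb₃, sb₄, sb₅, ω₁, ω₂, ω₃, ω₄, ω₅, dc]
    try field_simp
    ring
  · simp only [extd]; rw [fd_sb₄ a u v ha, fd_sb₄ a v u ha]
    simp [wedge, s₁, s₂, s₃, sb₃, sb₄, sb₅, ω₁, ω₂, ω₃, ω₄, ω₅, dc]
    try field_simp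
    ring
  · simp only [extd]; rw [fd_sb₅ a u v, fd_sb₅ a v u]
    simp [wedge, s₁, s₂, s₃, sb₃, sb₄, sb₅, ω₁, ω₂, ω₃, ω₄, ω₅, dc]
    try field_simp
    ring

end
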